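/- arXiv:2306.12351 — 4 statements merged into one kernel-verified Lean document; each statement's English description precedes it below -/
import Mathlib

section
/- For all real p with 0 ≤ p ≤ ψ, where ψ = (3-√5)/2, we have h(p) ≤ h(2p - p²). -/
/-- The binary entropy function. -/
noncomputable def binEnt (p : ℝ) : ℝ := -(p * Real.logb 2 p + (1 - p) * Real.logb 2 (1 - p))

lemma binEnt_eq (p : ℝ) : binEnt p = Real.binEntropy p / Real.log 2 := by
  unfold binEnt Real.binEntropy Real.logb
  rcases eq_or_ne p 0 with rfl | hp
  · simp
  rcases eq_or_ne p 1 with rfl | hp1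
  · simp
  rw [Real.log_inv, Real.log_inv]
  ring

lemma binEnt_mono {x y : ℝ} (hx : 0 ≤ x) (hxy : x ≤ y) (hy : y ≤ 1/2) :
    binEnt x ≤ binEnt y := by
  rw [binEnt_eq, binEnt_eq]
  have hl : (0:ℝ) < Real.log 2 := Real.log_pos (by norm_num)
  apply div_le_div_of_nonneg_right ?_ hl.le
  exact Real.binEntropy_strictMonoOn.monotoneOn
    ⟨hx, by linarith⟩ ⟨by linarith, by linarith⟩ hxy

lemma binEnt_symm (p : ℝ) : binEnt (1 - p) = binEnt p := by
  rw [binEnt_eq, binEnt_eq, Real.binEntropy_one_sub]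

/-- For all `0 ≤ p ≤ ψ = (3-√5)/2`, `h(p) ≤ h(2p - p²)`. -/
theorem stmt1 (p : ℝ) (hp0 : 0 ≤ p) (hp1 : p ≤ (3 - Real.sqrt 5) / 2) :
    binEnt p ≤ binEnt (2 * p - p ^ 2) := by
  have hs : Real.sqrt 5 ^ 2 = 5 := Real.sq_sqrt (by norm_num)
  have hs2 : 2 ≤ Real.sqrt 5 := by
    nlinarith [Real.sqrt_nonneg 5]
  have hph : p ≤ 1/2 := by linarith
  rcases le_or_gt (2 * p - p ^ 2) (1/2) with h | h
  · exact binEnt_mono hp0 (by nlinarith) h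
  · rw [← binEnt_symm (2 * p - p ^ 2)]
    have key : p ≤ 1 - (2 * p - p ^ 2) := by nlinarith
    exact binEnt_mono hp0 key (by linarith)
end

section
/- The family S¹²₄, consisting of all subsets S of {0,1,...,11} of size at least 4 such that either {0,1} ⊆ S, or 0 ∈ S and S ⊆ {0,2,4,6,8,10}, or 1 ∈ S and S ⊆ {1,3,5,7,9,11}, is union-closed. -/
/-- The even elements of `{0,…,11}`. -/
def evens12 : Finset (Fin 12) := {0, 2, 4, 6, 8, 10}

/-- The odd elements of `{0,…,11}`. -/
def odds12 : Finset (Fin 12) := {1, 3, 5, 7, 9, 11}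

/-- The family `S¹²₄` of all subsets `S` of `{0,…,11}` with `|S| ≥ 4` such that either
`{0,1} ⊆ S`, or `0 ∈ S` and `S ⊆ evens`, or `1 ∈ S` and `S ⊆ odds`. -/
def S124 : Finset (Finset (Fin 12)) :=
  Finset.univ.filter (fun S => 4 ≤ S.card ∧
    (({0, 1} : Finset (Fin 12)) ⊆ S ∨ (0 ∈ S ∧ S ⊆ evens12) ∨ (1 ∈ S ∧ S ⊆ odds12)))

/-- The family `S¹²₄` is union-closed. -/
theorem stmt10 : ∀ A ∈ S124, ∀ B ∈ S124, A ∪ B ∈ S124 := by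
  intro A hA B hB
  simp only [S124, Finset.mem_filter, Finset.mem_univ, true_and] at *
  obtain ⟨hAc, hA⟩ := hA
  obtain ⟨hBc, hB⟩ := hB
  refine ⟨le_trans hAc (Finset.card_le_card Finset.subset_union_left), ?_⟩
  have pair : ∀ S : Finset (Fin 12), (({0,1} : Finset (Fin 12)) ⊆ S) ↔ (0 ∈ S ∧ 1 ∈ S) := by
    intro S; simp [Finset.insert_subset_iff]
  rcases hA with h | ⟨h0, hE⟩ | ⟨h1, hO⟩ <;>
    rcases hB with h' | ⟨h0', hE'⟩ | ⟨h1', hO'⟩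
  · exact Or.inl (h.trans Finset.subset_union_left)
  · exact Or.inl (h.trans Finset.subset_union_left)
  · exact Or.inl (h.trans Finset.subset_union_left)
  · exact Or.inl (h'.trans Finset.subset_union_right)
  · exact Or.inr (Or.inl ⟨Finset.mem_union_left _ h0, Finset.union_subset hE hE'⟩)
  · refine Or.inl ((pair _).mpr ⟨Finset.mem_union_left _ h0, Finset.mem_union_right _ h1'⟩)
  · exact Or.inl (h'.trans Finset.subset_union_right)
  · refine Or.inl ((pair _).mpr ⟨Finset.mem_union_right _ h0', Finset.mem_union_left _ h1⟩)
  · exact Or.inr (Or.inr ⟨Finset.mem_union_left _ h1, Finset.union_subset hO hO'⟩)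
end

section
/- For every even integer n and every k ≥ 3 with n ≥ 10k, the family Sⁿ_k consisting of all subsets S of [n] with |S| ≥ k such that either {1,2} ⊆ S, or (2 ∈ S and S ⊆ E_n), or (1 ∈ S and S ⊆ O_n), is union-closed, where E_n and O_n are the even and odd elements of [n]. -/
/-- The even elements of `[n] = {1,…,n}`. -/
def En (n : ℕ) : Finset ℕ := (Finset.Icc 1 n).filter (fun i => i % 2 = 0)

/-- The odd elements of `[n] = {1,…,n}`. -/
def On (n : ℕ) : Finset ℕ := (Finset.Icc 1 n).filter (fun i => i % 2 = 1)

/-- The family `Sⁿ_k` of all subsets `S ⊆ [n]` with `|S| ≥ k` such that either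
`{1, 2} ⊆ S`, or `2 ∈ S` and `S ⊆ E_n`, or `1 ∈ S` and `S ⊆ O_n`. -/
def Snk (n k : ℕ) : Finset (Finset ℕ) :=
  (Finset.Icc 1 n).powerset.filter (fun S => k ≤ S.card ∧
    (({1, 2} : Finset ℕ) ⊆ S ∨ (2 ∈ S ∧ S ⊆ En n) ∨ (1 ∈ S ∧ S ⊆ On n)))

/-- For every even `n` and `k ≥ 3` with `n ≥ 10k`, the family `Sⁿ_k` is union-closed. -/
theorem stmt14 (n k : ℕ) (hn : Even n) (hk : 3 ≤ k) (hnk : 10 * k ≤ n) :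
    ∀ A ∈ Snk n k, ∀ B ∈ Snk n k, A ∪ B ∈ Snk n k := by
  intro A hA B hB
  simp only [Snk, Finset.mem_filter, Finset.mem_powerset] at *
  obtain ⟨hAsub, hAcard, hAc⟩ := hA
  obtain ⟨hBsub, hBcard, hBc⟩ := hB
  refine ⟨Finset.union_subset hAsub hBsub, le_trans hAcard (Finset.card_le_card Finset.subset_union_left), ?_⟩
  have pair : ∀ S T : Finset ℕ, ({1, 2} : Finset ℕ) ⊆ S → ({1, 2} : Finset ℕ) ⊆ S ∪ T := by
    intro S T h; exact h.trans Finset.subset_union_left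
  rcases hAc with h | ⟨h2, hE⟩ | ⟨h1, hO⟩
  · exact Or.inl (pair A B h)
  · rcases hBc with h | ⟨h2', hE'⟩ | ⟨h1', hO'⟩
    · left
      exact (pair B A h).trans (by rw [Finset.union_comm])
    · exact Or.inr (Or.inl ⟨Finset.mem_union_left _ h2, Finset.union_subset hE hE'⟩)
    · left
      intro x hx
      simp only [Finset.mem_insert, Finset.mem_singleton] at hx
      rcases hx with rfl | rfl
      · exact Finset.mem_union_right _ h1'
      · exact Finset.mem_union_left _ h2
  · rcases hBc with h | ⟨h2', hE'⟩ | ⟨h1', hO'⟩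
    · left
      exact (pair B A h).trans (by rw [Finset.union_comm])
    · left
      intro x hx
      simp only [Finset.mem_insert, Finset.mem_singleton] at hx
      rcases hx with rfl | rfl
      · exact Finset.mem_union_left _ h1
      · exact Finset.mem_union_right _ h2'
    · exact Or.inr (Or.inr ⟨Finset.mem_union_left _ h1, Finset.union_subset hO hO'⟩)
end

section
/- Let n be even, k ≥ 3, and suppose C(n-3, k-3) < 2·Σ_{j ≥ k-1} C(n/2 - 2, j). Then in the family Sⁿ_k, every element i with 3 ≤ i ≤ n appears in fewer than half of the sets of Sⁿ_k. -/
lemma mem_En {n x : ℕ} : x ∈ En n ↔ 1 ≤ x ∧ x ≤ n ∧ x % 2 = 0 := by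
  simp [En, Finset.mem_filter, Finset.mem_Icc, and_assoc]

lemma mem_On {n x : ℕ} : x ∈ On n ↔ 1 ≤ x ∧ x ≤ n ∧ x % 2 = 1 := by
  simp [On, Finset.mem_filter, Finset.mem_Icc, and_assoc]

lemma card_En (n : ℕ) : (En n).card = n / 2 := by
  have : En n = Finset.image (fun j => 2 * j) (Finset.Icc 1 (n / 2)) := by
    ext x
    simp only [mem_En, Finset.mem_image, Finset.mem_Icc]
    constructor
    · rintro ⟨h1, h2, h3⟩
      exact ⟨x / 2, by omega, by omega⟩
    · rintro ⟨j, hj, rfl⟩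
      omega
  rw [this, Finset.card_image_of_injective _ (fun a b hab => by omega), Nat.card_Icc]
  omega

lemma card_On (n : ℕ) : (On n).card = (n + 1) / 2 := by
  have : On n = Finset.image (fun j => 2 * j - 1) (Finset.Icc 1 ((n + 1) / 2)) := by
    ext x
    simp only [mem_On, Finset.mem_image, Finset.mem_Icc]
    constructor
    · rintro ⟨h1, h2, h3⟩
      exact ⟨x / 2 + 1, by omega, by omega⟩
    · rintro ⟨j, hj, rfl⟩
      omega
  rw [this, Finset.card_image_of_injective _ (fun a b hab => by omega), Nat.card_Icc]
  omega

def Fam (R u : Finset ℕ) (c : ℕ) : Finset (Finset ℕ) :=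
  (u.powerset.filter fun T => c ≤ T.card).image (fun T => R ∪ T)

lemma mem_Fam {R u : Finset ℕ} (h : Disjoint R u) {c : ℕ} {S : Finset ℕ} :
    S ∈ Fam R u c ↔ R ⊆ S ∧ S ⊆ R ∪ u ∧ R.card + c ≤ S.card := by
  constructor
  · intro hS
    simp only [Fam, Finset.mem_image, Finset.mem_filter, Finset.mem_powerset] at hS
    obtain ⟨T, ⟨hTu, hTc⟩, rfl⟩ := hS
    refine ⟨Finset.subset_union_left, Finset.union_subset_union_right hTu, ?_⟩
    rw [Finset.card_union_of_disjoint (h.mono_right hTu)]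
    omega
  · rintro ⟨h1, h2, h3⟩
    simp only [Fam, Finset.mem_image, Finset.mem_filter, Finset.mem_powerset]
    refine ⟨S \ R, ⟨?_, ?_⟩, ?_⟩
    · intro x hx
      simp only [Finset.mem_sdiff] at hx
      have := h2 hx.1
      simp only [Finset.mem_union] at this
      tauto
    · rw [Finset.card_sdiff_of_subset h1]; omega
    · rw [Finset.union_sdiff_of_subset h1]

lemma card_Fam {R u : Finset ℕ} (h : Disjoint R u) (c : ℕ) :
    (Fam R u c).card = ∑ j ∈ Finset.Icc c u.card, (u.card).choose j := by
  rw [Fam, Finset.card_image_of_injOn]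
  · have : (u.powerset.filter fun T => c ≤ T.card)
        = (Finset.Icc c u.card).biUnion (fun j => Finset.powersetCard j u) := by
      ext T
      simp only [Finset.mem_filter, Finset.mem_powerset, Finset.mem_biUnion, Finset.mem_Icc,
        Finset.mem_powersetCard]
      constructor
      · rintro ⟨hTu, hc⟩
        exact ⟨T.card, ⟨hc, Finset.card_le_card hTu⟩, hTu, rfl⟩
      · rintro ⟨j, ⟨hj1, hj2⟩, hTu, rfl⟩
        exact ⟨hTu, hj1⟩
    rw [this, Finset.card_biUnion]
    · exact Finset.sum_congr rfl fun j _ => Finset.card_powersetCard j u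
    · intro a _ b _ hab
      simp only [Finset.disjoint_left, Finset.mem_powersetCard]
      rintro T ⟨_, rfl⟩ ⟨_, h2⟩
      exact hab h2
  · intro T1 hT1 T2 hT2 hEq
    simp only [Finset.coe_filter, Finset.mem_powerset, Set.mem_setOf_eq] at hT1 hT2
    have e1 : (R ∪ T1) \ R = T1 := Finset.union_sdiff_cancel_left (h.mono_right hT1.1)
    have e2 : (R ∪ T2) \ R = T2 := Finset.union_sdiff_cancel_left (h.mono_right hT2.1)
    have := congrArg (fun s => s \ R) hEq
    simp only at this
    rw [e1, e2] at this
    exact this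

lemma disj_insert_erase {R u : Finset ℕ} (hd : Disjoint R u) {i : ℕ} (hi : i ∈ u) :
    Disjoint (insert i R) (u.erase i) := by
  simp only [Finset.disjoint_left, Finset.mem_insert, Finset.mem_erase]
  rintro a (rfl | haR) ⟨hne, hau⟩
  · exact hne rfl
  · exact Finset.disjoint_left.mp hd haR hau

lemma Fam_filter_mem {R u : Finset ℕ} (hd : Disjoint R u) {i c : ℕ} (hi : i ∈ u) :
    (Fam R u (c + 1)).filter (fun S => i ∈ S) = Fam (insert i R) (u.erase i) c := by
  have hiR : i ∉ R := fun hiR => (Finset.disjoint_left.mp hd hiR) hi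
  have hd' : Disjoint (insert i R) (u.erase i) := disj_insert_erase hd hi
  have hcard : (insert i R).card = R.card + 1 := Finset.card_insert_of_notMem hiR
  have hun : insert i R ∪ u.erase i = R ∪ u := by
    ext x
    simp only [Finset.mem_union, Finset.mem_insert, Finset.mem_erase]
    constructor
    · rintro ((rfl | hx) | ⟨_, hx⟩) <;> tauto
    · rintro (hx | hx)
      · tauto
      · by_cases hxi : x = i <;> tauto
  ext S
  simp only [Finset.mem_filter, mem_Fam hd, mem_Fam hd', hcard, hun]
  constructor
  · rintro ⟨⟨hRS, hSu, hc⟩, hiS⟩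
    refine ⟨Finset.insert_subset hiS hRS, hSu, by omega⟩
  · rintro ⟨hRS, hSu, hc⟩
    have hiS : i ∈ S := hRS (Finset.mem_insert_self i R)
    exact ⟨⟨(Finset.insert_subset_iff.mp hRS).2, hSu, by omega⟩, hiS⟩

lemma Fam_filter_notMem {R u : Finset ℕ} (hd : Disjoint R u) {i c : ℕ} (hi : i ∈ u) :
    (Fam R u c).filter (fun S => i ∉ S) = Fam R (u.erase i) c := by
  have hiR : i ∉ R := fun hiR => (Finset.disjoint_left.mp hd hiR) hi
  have hd' : Disjoint R (u.erase i) := hd.mono_right (Finset.erase_subset i u)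
  ext S
  simp only [Finset.mem_filter, mem_Fam hd, mem_Fam hd']
  constructor
  · rintro ⟨⟨hRS, hSu, hc⟩, hiS⟩
    refine ⟨hRS, ?_, hc⟩
    intro x hxS
    have := hSu hxS
    simp only [Finset.mem_union, Finset.mem_erase] at *
    rcases this with hx | hx
    · tauto
    · refine Or.inr ⟨?_, hx⟩; rintro rfl; exact hiS hxS
  · rintro ⟨hRS, hSu, hc⟩
    refine ⟨⟨hRS, hSu.trans (Finset.union_subset_union_right (Finset.erase_subset i u)), hc⟩, ?_⟩
    intro hiS
    have := hSu hiS
    simp only [Finset.mem_union, Finset.mem_erase] at this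
    tauto

lemma Fam_filter_empty {R u : Finset ℕ} (hd : Disjoint R u) {i : ℕ} (c : ℕ)
    (hiR : i ∉ R) (hiu : i ∉ u) :
    (Fam R u c).filter (fun S => i ∈ S) = ∅ := by
  rw [Finset.filter_eq_empty_iff]
  intro S hS
  rw [mem_Fam hd] at hS
  intro hiS
  have := hS.2.1 hiS
  simp only [Finset.mem_union] at this
  tauto

lemma Fam_card_filter_mem {R u : Finset ℕ} (hd : Disjoint R u) {i c : ℕ} (hi : i ∈ u) :
    ((Fam R u (c + 1)).filter (fun S => i ∈ S)).card
      = ∑ j ∈ Finset.Icc c (u.card - 1), (u.card - 1).choose j := by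
  rw [Fam_filter_mem hd hi, card_Fam (disj_insert_erase hd hi), Finset.card_erase_of_mem hi]

lemma Fam_card_split {R u : Finset ℕ} (hd : Disjoint R u) {z : ℕ} (c : ℕ) (hz : z ∈ u) :
    (Fam R u (c + 1)).card = (∑ j ∈ Finset.Icc c (u.card - 1), (u.card - 1).choose j)
      + ∑ j ∈ Finset.Icc (c + 1) (u.card - 1), (u.card - 1).choose j := by
  have key := Finset.card_filter_add_card_filter_not
    (s := Fam R u (c + 1)) (p := fun S => z ∈ S)
  rw [Fam_card_filter_mem hd hz] at key
  rw [Fam_filter_notMem hd hz, card_Fam (hd.mono_right (Finset.erase_subset z u)),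
    Finset.card_erase_of_mem hz] at key
  omega

lemma Snk_eq (n k : ℕ) (hn2 : 2 ≤ n) (hk : 3 ≤ k) :
    Snk n k = Fam {1, 2} (Finset.Icc 3 n) (k - 2) ∪ Fam {2} ((En n).erase 2) (k - 1)
      ∪ Fam {1} ((On n).erase 1) (k - 1) := by
  have d1 : Disjoint ({1, 2} : Finset ℕ) (Finset.Icc 3 n) := by
    simp only [Finset.disjoint_left, Finset.mem_insert, Finset.mem_singleton, Finset.mem_Icc]
    rintro a (rfl | rfl) <;> omega
  have d2 : Disjoint ({2} : Finset ℕ) ((En n).erase 2) := by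
    simp [Finset.disjoint_left]
  have d3 : Disjoint ({1} : Finset ℕ) ((On n).erase 1) := by
    simp [Finset.disjoint_left]
  have h2En : (2 : ℕ) ∈ En n := mem_En.mpr ⟨by norm_num, hn2, by norm_num⟩
  have h1On : (1 : ℕ) ∈ On n := mem_On.mpr ⟨le_refl 1, by omega, by norm_num⟩
  have u1 : ({1, 2} : Finset ℕ) ∪ Finset.Icc 3 n = Finset.Icc 1 n := by
    ext x
    simp only [Finset.mem_union, Finset.mem_insert, Finset.mem_singleton, Finset.mem_Icc]
    omega
  have u2 : ({2} : Finset ℕ) ∪ (En n).erase 2 = En n := by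
    rw [← Finset.insert_eq, Finset.insert_erase h2En]
  have u3 : ({1} : Finset ℕ) ∪ (On n).erase 1 = On n := by
    rw [← Finset.insert_eq, Finset.insert_erase h1On]
  have hEnsub : En n ⊆ Finset.Icc 1 n := Finset.filter_subset _ _
  have hOnsub : On n ⊆ Finset.Icc 1 n := Finset.filter_subset _ _
  have c12 : ({1, 2} : Finset ℕ).card = 2 := by decide
  ext S
  simp only [Snk, Finset.mem_filter, Finset.mem_powerset, Finset.mem_union,
    mem_Fam d1, mem_Fam d2, mem_Fam d3, u1, u2, u3, c12, Finset.card_singleton,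
    Finset.singleton_subset_iff]
  constructor
  · rintro ⟨hsub, hcard, hP | hP | hP⟩
    · exact Or.inl (Or.inl ⟨hP, hsub, by omega⟩)
    · exact Or.inl (Or.inr ⟨hP.1, hP.2, by omega⟩)
    · exact Or.inr ⟨hP.1, hP.2, by omega⟩
  · rintro ((⟨h1, h2, h3⟩ | ⟨h1, h2, h3⟩) | ⟨h1, h2, h3⟩)
    · exact ⟨h2, by omega, Or.inl h1⟩
    · exact ⟨h2.trans hEnsub, by omega, Or.inr (Or.inl ⟨h1, h2⟩)⟩
    · exact ⟨h2.trans hOnsub, by omega, Or.inr (Or.inr ⟨h1, h2⟩)⟩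

/-- If `n` is even, `k ≥ 3`, and `C(n-3, k-3) < 2·Σ_{j ≥ k-1} C(n/2-2, j)`, then every
element `i` with `3 ≤ i ≤ n` appears in fewer than half of the sets of `Sⁿ_k`. -/
theorem stmt15 (n k : ℕ) (hn : Even n) (hk : 3 ≤ k)
    (h : Nat.choose (n - 3) (k - 3)
        < 2 * ∑ j ∈ Finset.Icc (k - 1) (n / 2 - 2), Nat.choose (n / 2 - 2) j) :
    ∀ i : ℕ, 3 ≤ i → i ≤ n →
      2 * ((Snk n k).filter (fun S => i ∈ S)).card < (Snk n k).card := by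
  intro i hi3 hin
  obtain ⟨halfn, rfl⟩ := hn
  set n := halfn + halfn with hn_def
  -- from `h`, the sum is nonzero, so the interval is nonempty
  have hkn : k - 1 ≤ n / 2 - 2 := by
    by_contra hc
    rw [Finset.Icc_eq_empty (by omega)] at h
    simp at h
  have hn8 : 8 ≤ n := by omega
  have hmod : n % 2 = 0 := by omega
  -- abbreviations
  set p := n / 2 - 2 with hp_def
  set m := n - 3 with hm_def
  -- disjointness facts
  have d1 : Disjoint ({1, 2} : Finset ℕ) (Finset.Icc 3 n) := by
    simp only [Finset.disjoint_left, Finset.mem_insert, Finset.mem_singleton, Finset.mem_Icc]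
    rintro a (rfl | rfl) <;> omega
  have d2 : Disjoint ({2} : Finset ℕ) ((En n).erase 2) := by
    simp [Finset.disjoint_left]
  have d3 : Disjoint ({1} : Finset ℕ) ((On n).erase 1) := by
    simp [Finset.disjoint_left]
  -- ground-set cardinalities
  have cG1 : (Finset.Icc 3 n).card - 1 = m := by rw [Nat.card_Icc]; omega
  have cG2 : ((En n).erase 2).card - 1 = p := by
    rw [Finset.card_erase_of_mem (mem_En.mpr ⟨by norm_num, by omega, by norm_num⟩), card_En]
    omega
  have cG3 : ((On n).erase 1).card - 1 = p := by
    rw [Finset.card_erase_of_mem (mem_On.mpr ⟨le_refl 1, by omega, by norm_num⟩), card_On]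
    omega
  have hiG1 : i ∈ Finset.Icc 3 n := Finset.mem_Icc.mpr ⟨hi3, hin⟩
  -- index arithmetic
  have ek2 : k - 2 = (k - 3) + 1 := by omega
  have ek1 : k - 1 = (k - 2) + 1 := by omega
  -- family 1 counts
  have hF1card : (Fam {1, 2} (Finset.Icc 3 n) (k - 2)).card
      = (∑ j ∈ Finset.Icc (k - 3) m, m.choose j) + ∑ j ∈ Finset.Icc (k - 2) m, m.choose j := by
    rw [ek2, Fam_card_split d1 (k - 3) hiG1, cG1]
  have hF1fil : ((Fam {1, 2} (Finset.Icc 3 n) (k - 2)).filter (fun S => i ∈ S)).card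
      = ∑ j ∈ Finset.Icc (k - 3) m, m.choose j := by
    rw [ek2, Fam_card_filter_mem d1 hiG1, cG1]
  -- family 2 counts (split at 4)
  have h4 : (4 : ℕ) ∈ (En n).erase 2 := by
    rw [Finset.mem_erase]
    exact ⟨by norm_num, mem_En.mpr ⟨by norm_num, by omega, by norm_num⟩⟩
  have hF2card : (Fam {2} ((En n).erase 2) (k - 1)).card
      = (∑ j ∈ Finset.Icc (k - 2) p, p.choose j) + ∑ j ∈ Finset.Icc (k - 1) p, p.choose j := by
    rw [ek1, Fam_card_split d2 (k - 2) h4, cG2]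
  -- family 3 counts (split at 3)
  have h3' : (3 : ℕ) ∈ (On n).erase 1 := by
    rw [Finset.mem_erase]
    exact ⟨by norm_num, mem_On.mpr ⟨by norm_num, by omega, by norm_num⟩⟩
  have hF3card : (Fam {1} ((On n).erase 1) (k - 1)).card
      = (∑ j ∈ Finset.Icc (k - 2) p, p.choose j) + ∑ j ∈ Finset.Icc (k - 1) p, p.choose j := by
    rw [ek1, Fam_card_split d3 (k - 2) h3', cG3]
  -- filtered counts for families 2 and 3, depending on the parity of i
  have hF23fil : ((Fam {2} ((En n).erase 2) (k - 1)).filter (fun S => i ∈ S)).card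
      + ((Fam {1} ((On n).erase 1) (k - 1)).filter (fun S => i ∈ S)).card
      = ∑ j ∈ Finset.Icc (k - 2) p, p.choose j := by
    rcases Nat.even_or_odd i with hpar | hpar
    · have himod : i % 2 = 0 := Nat.even_iff.mp hpar
      have hiG2 : i ∈ (En n).erase 2 := by
        rw [Finset.mem_erase]
        exact ⟨by omega, mem_En.mpr ⟨by omega, hin, himod⟩⟩
      have hnotG3 : i ∉ (On n).erase 1 := by
        rw [Finset.mem_erase, mem_On]
        rintro ⟨-, -, -, hodd⟩
        omega
      rw [ek1, Fam_card_filter_mem d2 hiG2, cG2,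
        Fam_filter_empty d3 _ (by simp; omega) hnotG3, Finset.card_empty]
      omega
    · have himod : i % 2 = 1 := Nat.odd_iff.mp hpar
      have hiG3 : i ∈ (On n).erase 1 := by
        rw [Finset.mem_erase]
        exact ⟨by omega, mem_On.mpr ⟨by omega, hin, himod⟩⟩
      have hnotG2 : i ∉ (En n).erase 2 := by
        rw [Finset.mem_erase, mem_En]
        rintro ⟨-, -, -, heven⟩
        omega
      rw [ek1, Fam_card_filter_mem d3 hiG3, cG3,
        Fam_filter_empty d2 _ (by simp; omega) hnotG2, Finset.card_empty]
      omega
  -- mutual disjointness of the three families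
  have memF1 : ∀ S ∈ Fam {1, 2} (Finset.Icc 3 n) (k - 2), (1 : ℕ) ∈ S ∧ (2 : ℕ) ∈ S := by
    intro S hS
    rw [mem_Fam d1] at hS
    exact ⟨hS.1 (by simp), hS.1 (by simp)⟩
  have memF2 : ∀ S ∈ Fam {2} ((En n).erase 2) (k - 1), ∀ x ∈ S, x % 2 = 0 := by
    intro S hS x hx
    rw [mem_Fam d2] at hS
    have := hS.2.1 hx
    simp only [Finset.mem_union, Finset.mem_singleton, Finset.mem_erase, mem_En] at this
    omega
  have memF3 : ∀ S ∈ Fam {1} ((On n).erase 1) (k - 1), ∀ x ∈ S, x % 2 = 1 := by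
    intro S hS x hx
    rw [mem_Fam d3] at hS
    have := hS.2.1 hx
    simp only [Finset.mem_union, Finset.mem_singleton, Finset.mem_erase, mem_On] at this
    omega
  have hd23 : Disjoint (Fam {2} ((En n).erase 2) (k - 1)) (Fam {1} ((On n).erase 1) (k - 1)) := by
    rw [Finset.disjoint_left]
    intro S h2' h3''
    rw [mem_Fam d2] at h2'
    have h2S : (2 : ℕ) ∈ S := h2'.1 (by simp)
    have := memF3 S h3'' 2 h2S
    omega
  have hd123 : Disjoint (Fam {1, 2} (Finset.Icc 3 n) (k - 2))
      (Fam {2} ((En n).erase 2) (k - 1) ∪ Fam {1} ((On n).erase 1) (k - 1)) := by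
    rw [Finset.disjoint_left]
    intro S h1' hUn
    obtain ⟨h1S, h2S⟩ := memF1 S h1'
    rw [Finset.mem_union] at hUn
    rcases hUn with hS | hS
    · have := memF2 S hS 1 h1S
      omega
    · have := memF3 S hS 2 h2S
      omega
  -- assemble
  have hSnkEq := Snk_eq n k (by omega) hk
  rw [Finset.union_assoc] at hSnkEq
  have hTot : (Snk n k).card = (Fam {1, 2} (Finset.Icc 3 n) (k - 2)).card
      + ((Fam {2} ((En n).erase 2) (k - 1)).card + (Fam {1} ((On n).erase 1) (k - 1)).card) := by
    rw [hSnkEq, Finset.card_union_of_disjoint hd123, Finset.card_union_of_disjoint hd23]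
  have hFil : ((Snk n k).filter (fun S => i ∈ S)).card
      = ((Fam {1, 2} (Finset.Icc 3 n) (k - 2)).filter (fun S => i ∈ S)).card
      + (((Fam {2} ((En n).erase 2) (k - 1)).filter (fun S => i ∈ S)).card
        + ((Fam {1} ((On n).erase 1) (k - 1)).filter (fun S => i ∈ S)).card) := by
    rw [hSnkEq, Finset.filter_union, Finset.filter_union,
      Finset.card_union_of_disjoint
        (hd123.mono (Finset.filter_subset _ _)
          ((Finset.union_subset_union (Finset.filter_subset _ _) (Finset.filter_subset _ _)))),
      Finset.card_union_of_disjoint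
        (hd23.mono (Finset.filter_subset _ _) (Finset.filter_subset _ _))]
  -- split off the first term of the size-(k-3) sum
  have hsplit : (∑ j ∈ Finset.Icc (k - 3) m, m.choose j)
      = m.choose (k - 3) + ∑ j ∈ Finset.Icc (k - 2) m, m.choose j := by
    have hins : Finset.Icc (k - 3) m = insert (k - 3) (Finset.Icc (k - 2) m) := by
      ext x
      simp only [Finset.mem_Icc, Finset.mem_insert]
      omega
    rw [hins, Finset.sum_insert (by simp only [Finset.mem_Icc]; omega)]
  rw [hTot, hFil, hF1card, hF1fil, hF23fil, hF2card, hF3card, hsplit]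
  omega
end
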